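/- For n ≥ 1, b₁, b₂ nonzero real numbers, and c₁ ∈ ℝ, define α : gl(n+1,ℝ) → sl(n+2,ℝ) by sending the block matrix with entries (a, Yᵀ; X, A) (where a = −Tr(A), X ∈ ℝⁿ, Y ∈ ℝⁿ, A ∈ gl(n,ℝ)) to the (n+2)×(n+2) block matrix with rows ((1/2)a, (1/(2b₁))Yᵀ, (1/(4b₁b₂))a ; b₁X, A, (1/(2b₂))X ; b₁b₂ a, b₂Yᵀ, (1/2)a). Then α is a Lie algebra homomorphism from sl(n+1,ℝ) into sl(n+2,ℝ). -/

import Mathlib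

/-- The extension map `α` of the Lagrangean contact example, written in
`(1,n,1)`-block form (the domain `sl(n+1,ℝ)` is written in `(1,n)`-block form,
with index type `Unit ⊕ Fin n`, the target `sl(n+2,ℝ)` with index type
`Unit ⊕ (Fin n ⊕ Unit)`).  For `M = (a, Yᵀ; X, A)` the image is
`((1/2)a, (1/(2b₁))Yᵀ, (1/(4b₁b₂))a ; b₁X, A, (1/(2b₂))X ; b₁b₂a, b₂Yᵀ, (1/2)a)`. -/
noncomputable def lagAlpha (n : ℕ) (b₁ b₂ : ℝ)
    (M : Matrix (Unit ⊕ Fin n) (Unit ⊕ Fin n) ℝ) :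
    Matrix (Unit ⊕ (Fin n ⊕ Unit)) (Unit ⊕ (Fin n ⊕ Unit)) ℝ :=
  fun r c =>
    match r, c with
    | .inl _, .inl _ => (1 / 2) * M (.inl ()) (.inl ())
    | .inl _, .inr (.inl j) => (1 / (2 * b₁)) * M (.inl ()) (.inr j)
    | .inl _, .inr (.inr _) => (1 / (4 * b₁ * b₂)) * M (.inl ()) (.inl ())
    | .inr (.inl i), .inl _ => b₁ * M (.inr i) (.inl ())
    | .inr (.inl i), .inr (.inl j) => M (.inr i) (.inr j)
    | .inr (.inl i), .inr (.inr _) => (1 / (2 * b₂)) * M (.inr i) (.inl ())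
    | .inr (.inr _), .inl _ => b₁ * b₂ * M (.inl ()) (.inl ())
    | .inr (.inr _), .inr (.inl j) => b₂ * M (.inl ()) (.inr j)
    | .inr (.inr _), .inr (.inr _) => (1 / 2) * M (.inl ()) (.inl ())

noncomputable def lagT (n : ℕ) (b₁ b₂ : ℝ) :
    Matrix (Unit ⊕ (Fin n ⊕ Unit)) (Unit ⊕ Fin n) ℝ :=
  fun r c =>
    match r, c with
    | .inl _, .inl _ => 1 / (2 * b₁)
    | .inl _, .inr _ => 0
    | .inr (.inl i), .inl _ => 0
    | .inr (.inl i), .inr j => if i = j then 1 else 0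
    | .inr (.inr _), .inl _ => b₂
    | .inr (.inr _), .inr _ => 0

noncomputable def lagS (n : ℕ) (b₁ b₂ : ℝ) :
    Matrix (Unit ⊕ Fin n) (Unit ⊕ (Fin n ⊕ Unit)) ℝ :=
  fun r c =>
    match r, c with
    | .inl _, .inl _ => b₁
    | .inl _, .inr (.inl _) => 0
    | .inl _, .inr (.inr _) => 1 / (2 * b₂)
    | .inr i, .inl _ => 0
    | .inr i, .inr (.inl j) => if i = j then 1 else 0
    | .inr i, .inr (.inr _) => 0

lemma lagAlpha_eq (n : ℕ) (b₁ b₂ : ℝ) (hb₁ : b₁ ≠ 0) (hb₂ : b₂ ≠ 0)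
    (M : Matrix (Unit ⊕ Fin n) (Unit ⊕ Fin n) ℝ) :
    lagAlpha n b₁ b₂ M = lagT n b₁ b₂ * M * lagS n b₁ b₂ := by
  funext r c
  rcases r with _ | (i | _) <;> rcases c with _ | (j | _) <;>
    simp [lagAlpha, lagT, lagS, Matrix.mul_apply, Fintype.sum_sum_type]
  all_goals first
      | tauto
      | ring1
      | (rw [mul_inv_cancel_right₀ hb₁])
      | (rw [mul_inv_cancel_right₀ hb₂])
      | (field_simp <;> ring)

lemma lagST (n : ℕ) (b₁ b₂ : ℝ) (hb₁ : b₁ ≠ 0) (hb₂ : b₂ ≠ 0) :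
    lagS n b₁ b₂ * lagT n b₁ b₂ = 1 := by
  funext r c
  rcases r with _ | i <;> rcases c with _ | j <;>
    simp [lagS, lagT, Matrix.mul_apply, Fintype.sum_sum_type, Matrix.one_apply] <;>
    field_simp <;> ring

/-- For `n ≥ 1` and nonzero reals `b₁, b₂`, the map `α` above
is a Lie algebra homomorphism from `sl(n+1,ℝ)` into `sl(n+2,ℝ)`: it is linear,
maps traceless matrices to traceless matrices, and preserves commutator
brackets of traceless matrices. -/
theorem lagAlpha_lieHom (n : ℕ) (hn : 1 ≤ n) (b₁ b₂ : ℝ) (hb₁ : b₁ ≠ 0) (hb₂ : b₂ ≠ 0) :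
    (∀ M N : Matrix (Unit ⊕ Fin n) (Unit ⊕ Fin n) ℝ,
        lagAlpha n b₁ b₂ (M + N) = lagAlpha n b₁ b₂ M + lagAlpha n b₁ b₂ N) ∧
    (∀ (c : ℝ) (M : Matrix (Unit ⊕ Fin n) (Unit ⊕ Fin n) ℝ),
        lagAlpha n b₁ b₂ (c • M) = c • lagAlpha n b₁ b₂ M) ∧
    (∀ M : Matrix (Unit ⊕ Fin n) (Unit ⊕ Fin n) ℝ,
        M.trace = 0 → (lagAlpha n b₁ b₂ M).trace = 0) ∧
    (∀ M N : Matrix (Unit ⊕ Fin n) (Unit ⊕ Fin n) ℝ, M.trace = 0 → N.trace = 0 →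
        lagAlpha n b₁ b₂ (M * N - N * M) =
          lagAlpha n b₁ b₂ M * lagAlpha n b₁ b₂ N -
            lagAlpha n b₁ b₂ N * lagAlpha n b₁ b₂ M) := by
  refine ⟨?_, ?_, ?_, ?_⟩
  · intro M N
    simp only [lagAlpha_eq n b₁ b₂ hb₁ hb₂]
    rw [Matrix.mul_add, Matrix.add_mul]
  · intro c M
    simp only [lagAlpha_eq n b₁ b₂ hb₁ hb₂]
    rw [Matrix.mul_smul, Matrix.smul_mul]
  · intro M hM
    rw [lagAlpha_eq n b₁ b₂ hb₁ hb₂, Matrix.trace_mul_cycle,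
      lagST n b₁ b₂ hb₁ hb₂, Matrix.one_mul, hM]
  · intro M N _ _
    simp only [lagAlpha_eq n b₁ b₂ hb₁ hb₂]
    have key : ∀ P Q : Matrix (Unit ⊕ Fin n) (Unit ⊕ Fin n) ℝ,
        (lagT n b₁ b₂ * P * lagS n b₁ b₂) * (lagT n b₁ b₂ * Q * lagS n b₁ b₂) =
          lagT n b₁ b₂ * (P * Q) * lagS n b₁ b₂ := by
      intro P Q
      have h : ∀ X : Matrix (Unit ⊕ Fin n) (Unit ⊕ (Fin n ⊕ Unit)) ℝ,
          lagS n b₁ b₂ * (lagT n b₁ b₂ * X) = X := fun X => by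
        rw [← Matrix.mul_assoc, lagST n b₁ b₂ hb₁ hb₂, Matrix.one_mul]
      simp only [Matrix.mul_assoc, h]
    rw [key, key, Matrix.mul_sub, Matrix.sub_mul]
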